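/- Let μ be a radially symmetric probability measure supported on the unit disk whose radial density f_R on {1-ε ≤ |z| ≤ 1} satisfies f_R(r) ≤ C_μ(1-r)^α with -1 < α < 0, and let X ∼ μ. Then for all t > max{2/ε, 1/(1-ε)}, sup_{1-ε/2 ≤ |z| ≤ 1} P(|z - X|^{-1} ≥ t) ≤ (2^{α+2} C_μ / (π (α+1) (1-ε))) · t^{-(2+α)}. -/

import Mathlib

open MeasureTheory

open scoped ENNReal

/-- Subadditivity of `x ^ p` for `p ∈ [0,1]`, in difference form. -/
lemma rpow_sub_rpow_le_aux {c d p : ℝ} (hc : 0 ≤ c) (hcd : c ≤ d) (hp0 : 0 ≤ p) (hp1 : p ≤ 1) :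
    d ^ p - c ^ p ≤ (d - c) ^ p := by
  have h1 : (0:ℝ) ≤ d - c := by linarith
  have key := NNReal.rpow_add_le_add_rpow (⟨d - c, h1⟩ : NNReal) (⟨c, hc⟩ : NNReal) hp0 hp1
  have key' : (d - c + c) ^ p ≤ (d - c) ^ p + c ^ p := by
    have h2 := NNReal.coe_le_coe.mpr key
    push_cast [NNReal.coe_rpow] at h2
    convert h2 using 2 <;> rfl
  have e : d - c + c = d := by ring
  rw [e] at key'
  linarith

/-- Key elementary integral estimate. -/
lemma lintegral_Icc_rpow_sub_le {α a m b L : ℝ} (hα : -1 < α) (hα0 : α < 0)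
    (hmb : m ≤ b) (hL : 0 ≤ L) (hma : m - a ≤ L) :
    ∫⁻ x in Set.Icc a m, ENNReal.ofReal ((b - x) ^ α) ≤
      ENNReal.ofReal (L ^ (α + 1) / (α + 1)) := by
  have hα1 : 0 < α + 1 := by linarith
  rcases lt_or_ge m a with ham | ham
  · rw [Set.Icc_eq_empty (not_le.mpr ham)]
    simp
  · rw [← MeasureTheory.restrict_Ioc_eq_restrict_Icc]
    have hint : IntervalIntegrable (fun x => (b - x) ^ α) volume a m := by
      have h0 := intervalIntegral.intervalIntegrable_rpow' (a := b - a) (b := b - m) hα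
      have h1 := h0.comp_sub_left b
      simpa using h1
    have hnn : ∀ x ∈ Set.Ioc a m, 0 ≤ (b - x) ^ α := fun x hx =>
      Real.rpow_nonneg (by linarith [hx.2]) _
    rw [← ofReal_integral_eq_lintegral_ofReal hint.1
      ((ae_restrict_iff' measurableSet_Ioc).mpr (.of_forall hnn))]
    apply ENNReal.ofReal_le_ofReal
    have hval : ∫ x in Set.Ioc a m, (b - x) ^ α =
        ((b - a) ^ (α + 1) - (b - m) ^ (α + 1)) / (α + 1) := by
      rw [← intervalIntegral.integral_of_le ham,
        intervalIntegral.integral_comp_sub_left (fun v => v ^ α) b,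
        integral_rpow (Or.inl hα)]
    rw [hval]
    gcongr
    have h2 : (b - a) ^ (α + 1) - (b - m) ^ (α + 1) ≤ ((b - a) - (b - m)) ^ (α + 1) :=
      rpow_sub_rpow_le_aux (by linarith) (by linarith) hα1.le (by linarith)
    have h3 : ((b - a) - (b - m)) = m - a := by ring
    rw [h3] at h2
    refine h2.trans (Real.rpow_le_rpow (by linarith) hma hα1.le)

/-- Pointwise density bound, in a small context. -/
lemma density_pointwise_bound {Cμ ε α r v : ℝ} (hC : 0 < Cμ) (hε2 : 0 < 1 - ε)
    (hα0 : α < 0) (hαm : -1 < α) (h0r : 0 ≤ r) (h1 : 1 - ε ≤ r) (h2 : r ≤ 1)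
    (hval : v ≤ Cμ * (1 - r) ^ α / (2 * Real.pi * r)) :
    v ≤ Cμ / (Real.pi * (1 - ε)) * (1 - r ^ 2) ^ α := by
  have hπ : 0 < Real.pi := Real.pi_pos
  have hr0 : (0:ℝ) < r := by linarith
  have hnum : 0 ≤ Cμ * (1 - r) ^ α := by
    have := Real.rpow_nonneg (by linarith : (0:ℝ) ≤ 1 - r) α
    positivity
  have hstep1 : Cμ * (1 - r) ^ α / (2 * Real.pi * r) ≤
      Cμ * (1 - r) ^ α / (2 * Real.pi * (1 - ε)) := by
    gcongr
  have hstep2 : (1 - r) ^ α ≤ 2 * (1 - r ^ 2) ^ α := by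
    rcases eq_or_lt_of_le h2 with heq | hlt
    · rw [heq]
      rw [show (1:ℝ) - 1 = 0 by norm_num, show (1:ℝ) - 1 ^ 2 = 0 by norm_num,
        Real.zero_rpow (ne_of_lt hα0)]
      norm_num
    · have hpos : (0:ℝ) < 1 - r ^ 2 := by nlinarith
      have hhalf : (0:ℝ) < (1 - r ^ 2) / 2 := by positivity
      have hle : (1 - r ^ 2) / 2 ≤ 1 - r := by nlinarith
      have hs1 : (1 - r) ^ α ≤ ((1 - r ^ 2) / 2) ^ α :=
        Real.rpow_le_rpow_of_nonpos hhalf hle hα0.le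
      have hs2 : ((1 - r ^ 2) / 2) ^ α = (1 - r ^ 2) ^ α * ((2:ℝ) ^ α)⁻¹ := by
        rw [Real.div_rpow hpos.le (by norm_num : (0:ℝ) ≤ 2), div_eq_mul_inv]
      have hs3 : ((2:ℝ) ^ α)⁻¹ ≤ 2 := by
        rw [← Real.rpow_neg (by norm_num : (0:ℝ) ≤ 2)]
        calc (2:ℝ) ^ (-α) ≤ 2 ^ (1:ℝ) :=
              Real.rpow_le_rpow_of_exponent_le one_le_two (by linarith)
          _ = 2 := Real.rpow_one 2
      have hs4 : (1 - r ^ 2) ^ α * ((2:ℝ) ^ α)⁻¹ ≤ (1 - r ^ 2) ^ α * 2 :=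
        mul_le_mul_of_nonneg_left hs3 (Real.rpow_nonneg hpos.le α)
      calc (1 - r) ^ α ≤ (1 - r ^ 2) ^ α * ((2:ℝ) ^ α)⁻¹ := by rw [← hs2]; exact hs1
        _ ≤ 2 * (1 - r ^ 2) ^ α := by linarith [hs4]
  have hnn2 : 0 ≤ (1 - r ^ 2) ^ α := Real.rpow_nonneg (by nlinarith) α
  have hden : (0:ℝ) < 2 * Real.pi * (1 - ε) := by positivity
  calc v ≤ Cμ * (1 - r) ^ α / (2 * Real.pi * (1 - ε)) := hval.trans hstep1
    _ ≤ Cμ * (2 * (1 - r ^ 2) ^ α) / (2 * Real.pi * (1 - ε)) :=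
        (div_le_div_iff_of_pos_right hden).mpr (mul_le_mul_of_nonneg_left hstep2 hC.le)
    _ = Cμ / (Real.pi * (1 - ε)) * (1 - r ^ 2) ^ α := by
        field_simp

theorem inverse_distance_tail_negative_alpha (μ : Measure ℂ) [IsProbabilityMeasure μ]
    (ε α Cμ : ℝ) (hε : 0 < ε) (hε1 : ε < 1) (hα : -1 < α) (hα0 : α < 0) (hC : 0 < Cμ)
    (hsupp : μ {z : ℂ | 1 < ‖z‖} = 0)
    (hsym : ∀ θ : ℝ, μ.map (fun z => Complex.exp (θ * Complex.I) * z) = μ)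
    (f : ℂ → ℝ)
    (hdens : μ.restrict {z : ℂ | 1 - ε ≤ ‖z‖ ∧ ‖z‖ ≤ 1} =
      (volume.restrict {z : ℂ | 1 - ε ≤ ‖z‖ ∧ ‖z‖ ≤ 1}).withDensity
        (fun z => ENNReal.ofReal (f z)))
    (hf : ∀ z : ℂ, 1 - ε ≤ ‖z‖ → ‖z‖ ≤ 1 →
      f z ≤ Cμ * (1 - ‖z‖) ^ α / (2 * Real.pi * ‖z‖)) :
    ∀ t : ℝ, max (2 / ε) (1 / (1 - ε)) < t →
      ∀ z : ℂ, 1 - ε / 2 ≤ ‖z‖ → ‖z‖ ≤ 1 →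
        (μ {x : ℂ | t ≤ ‖z - x‖⁻¹}).toReal ≤
          (2 : ℝ) ^ (α + 2) * Cμ / (Real.pi * (α + 1) * (1 - ε)) * t ^ (-(2 + α)) := by
  intro t ht z hz1 hz2
  have hπ : 0 < Real.pi := Real.pi_pos
  have hε2 : (0:ℝ) < 1 - ε := by linarith
  have hα1 : (0:ℝ) < α + 1 := by linarith
  have ht2 : 2 / ε < t := lt_of_le_of_lt (le_max_left _ _) ht
  have ht3 : 1 / (1 - ε) < t := lt_of_le_of_lt (le_max_right _ _) ht
  have ht0 : 0 < t := lt_trans (by positivity) ht2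
  have hinv1 : 1 / t < ε / 2 := by
    rw [div_lt_div_iff₀ ht0 (by norm_num : (0:ℝ) < 2)]
    have h := (div_lt_iff₀ hε).mp ht2
    nlinarith
  have hinv2 : 1 / t < 1 - ε := by
    rw [div_lt_iff₀ ht0]
    have h := (div_lt_iff₀ hε2).mp ht3
    nlinarith
  have hinv3 : 1 / t < 1 / 3 := by linarith
  set s : ℝ := ‖z‖ with hs_def
  have hs0 : (0:ℝ) < s := by simp only [hs_def]; linarith
  -- Step 1: rotate `z` to the positive real axis.
  set S : Set ℂ := {x : ℂ | t ≤ ‖(s : ℂ) - x‖⁻¹} with hS_def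
  have hSmeas : ∀ w : ℂ, MeasurableSet {x : ℂ | t ≤ ‖w - x‖⁻¹} := fun w =>
    measurableSet_le measurable_const ((measurable_const.sub measurable_id).norm.inv)
  have hrot : μ {x : ℂ | t ≤ ‖z - x‖⁻¹} = μ S := by
    have hz' : z = (s : ℂ) * Complex.exp (↑(Complex.arg z) * Complex.I) := by
      rw [hs_def]
      exact (Complex.norm_mul_exp_arg_mul_I z).symm
    have key : ∀ x : ℂ, ‖z - Complex.exp (↑(Complex.arg z) * Complex.I) * x‖ = ‖(s : ℂ) - x‖ := by
      intro x
      have h1 : z - Complex.exp (↑(Complex.arg z) * Complex.I) * x =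
          Complex.exp (↑(Complex.arg z) * Complex.I) * ((s : ℂ) - x) := by
        rw [mul_sub]
        congr 1
        rw [mul_comm]
        exact hz'
      rw [h1, norm_mul, Complex.norm_exp_ofReal_mul_I,
        one_mul]
    have hgmeas : Measurable (fun x : ℂ => Complex.exp (↑(Complex.arg z) * Complex.I) * x) :=
      measurable_id.const_mul _
    conv_lhs => rw [← hsym (Complex.arg z)]
    rw [Measure.map_apply hgmeas (hSmeas z)]
    congr 1
    ext x
    simp only [Set.mem_preimage, Set.mem_setOf_eq, hS_def, key x]
  -- Step 2: throw away the part outside the unit disk.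
  set A : Set ℂ := {x : ℂ | 1 - ε ≤ ‖x‖ ∧ ‖x‖ ≤ 1} with hA_def
  set E : Set ℂ := S ∩ {x : ℂ | ‖x‖ ≤ 1} with hE_def
  have hEmeas : MeasurableSet E :=
    (hSmeas ((s : ℂ))).inter (measurableSet_le measurable_norm measurable_const)
  have hdist : ∀ x ∈ S, ‖(s : ℂ) - x‖ ≤ 1 / t := by
    intro x hx
    have h1 : t ≤ ‖(s : ℂ) - x‖⁻¹ := hx
    rcases eq_or_lt_of_le (norm_nonneg ((s : ℂ) - x)) with hw | hw
    · rw [← hw]; positivity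
    · rw [le_div_iff₀ ht0]
      have h2 := mul_le_mul_of_nonneg_left h1 hw.le
      rw [mul_inv_cancel₀ hw.ne'] at h2
      linarith [h2]
  have hEA : E ⊆ A := by
    intro x hx
    have h1 : ‖(s : ℂ) - x‖ ≤ 1 / t := hdist x hx.1
    have h2 : ‖(s : ℂ)‖ - ‖x‖ ≤ ‖(s : ℂ) - x‖ := norm_sub_norm_le _ _
    have h3 : ‖(s : ℂ)‖ = s := by
      rw [Complex.norm_real, Real.norm_eq_abs, abs_of_pos hs0]
    constructor
    · rw [h3] at h2; linarith
    · exact hx.2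
  have hμS : μ S ≤ μ E := by
    have hsub : S ⊆ E ∪ {x : ℂ | 1 < ‖x‖} := by
      intro x hx
      by_cases h : ‖x‖ ≤ 1
      · exact Or.inl ⟨hx, h⟩
      · exact Or.inr (not_le.mp h)
    calc μ S ≤ μ (E ∪ {x : ℂ | 1 < ‖x‖}) := measure_mono hsub
      _ ≤ μ E + μ {x : ℂ | 1 < ‖x‖} := measure_union_le _ _
      _ = μ E := by rw [hsupp, add_zero]
  -- Step 3: express `μ E` via the density.
  have hμE : μ E = ∫⁻ x in E, ENNReal.ofReal (f x) := by
    have h1 : μ E = μ.restrict A E := by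
      rw [Measure.restrict_apply hEmeas, Set.inter_eq_self_of_subset_left hEA]
    rw [h1, hA_def, hdens, withDensity_apply _ hEmeas, Measure.restrict_restrict hEmeas,
      Set.inter_eq_self_of_subset_left hEA]
  -- Step 4: pointwise bound of the density on `E`.
  set c1 : ℝ := Cμ / (Real.pi * (1 - ε)) with hc1_def
  have hc1 : 0 < c1 := by positivity
  set gR : ℝ × ℝ → ℝ≥0∞ := fun p => ENNReal.ofReal (c1 * (1 - (p.1 ^ 2 + p.2 ^ 2)) ^ α)
    with hgR_def
  have hgRmeas : Measurable gR := by
    apply Measurable.ennreal_ofReal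
    exact measurable_const.mul
      ((measurable_const.sub ((measurable_fst.pow measurable_const).add
        (measurable_snd.pow measurable_const))).pow measurable_const)
  have hpt : ∀ x ∈ E, ENNReal.ofReal (f x) ≤ gR (x.re, x.im) := by
    intro x hx
    obtain ⟨h1, h2⟩ := hEA hx
    have hsq : ‖x‖ ^ 2 = x.re ^ 2 + x.im ^ 2 := by
      rw [Complex.sq_norm, Complex.normSq_apply]; ring
    have hfinal : f x ≤ c1 * (1 - (x.re ^ 2 + x.im ^ 2)) ^ α := by
      rw [← hsq, hc1_def]
      exact density_pointwise_bound hC hε2 hα0 hα (norm_nonneg x) h1 h2 (hf x h1 h2)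
    exact ENNReal.ofReal_le_ofReal hfinal
  -- Step 5: move to `ℝ × ℝ` and restrict to a small rectangle.
  set R : Set (ℝ × ℝ) := {p : ℝ × ℝ | (s - 1/t ≤ p.1 ∧ p.1 ≤ s + 1/t) ∧ |p.2| ≤ 1/t ∧
      p.1 ^ 2 + p.2 ^ 2 ≤ 1} with hR_def
  have hRmeas : MeasurableSet R := by
    refine MeasurableSet.inter ?_ (MeasurableSet.inter ?_ ?_)
    · exact (measurableSet_le measurable_const measurable_fst).inter
        (measurableSet_le measurable_fst measurable_const)
    · exact measurableSet_le measurable_snd.abs measurable_const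
    · exact measurableSet_le
        ((measurable_fst.pow measurable_const).add (measurable_snd.pow measurable_const))
        measurable_const
  have hEE' : E ⊆ Complex.measurableEquivRealProd ⁻¹' R := by
    intro x hx
    have h1 : ‖(s : ℂ) - x‖ ≤ 1 / t := hdist x hx.1
    have hre : |s - x.re| ≤ 1/t := by
      have h2 : |((s : ℂ) - x).re| ≤ ‖(s : ℂ) - x‖ := Complex.abs_re_le_norm _
      simp only [Complex.sub_re, Complex.ofReal_re] at h2
      linarith
    have him : |x.im| ≤ 1/t := by
      have h2 : |((s : ℂ) - x).im| ≤ ‖(s : ℂ) - x‖ := Complex.abs_im_le_norm _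
      simp only [Complex.sub_im, Complex.ofReal_im, zero_sub, abs_neg] at h2
      linarith
    have hsq : ‖x‖ ^ 2 = x.re ^ 2 + x.im ^ 2 := by
      rw [Complex.sq_norm, Complex.normSq_apply]; ring
    have hx2 : ‖x‖ ≤ 1 := hx.2
    have hle1 : x.re ^ 2 + x.im ^ 2 ≤ 1 := by
      rw [← hsq]
      have h4 : ‖x‖ ^ 2 ≤ 1 ^ 2 := pow_le_pow_left₀ (norm_nonneg x) hx2 2
      simpa using h4
    have habs := abs_le.mp hre
    rw [Set.mem_preimage, Complex.measurableEquivRealProd_apply, hR_def, Set.mem_setOf_eq]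
    exact ⟨⟨by linarith [habs.2], by linarith [habs.1]⟩, him, hle1⟩
  have hC2 : (μ {x : ℂ | t ≤ ‖z - x‖⁻¹}) ≤ ∫⁻ p, Set.indicator R gR p := by
    rw [hrot]
    calc μ S ≤ μ E := hμS
      _ = ∫⁻ x in E, ENNReal.ofReal (f x) := hμE
      _ ≤ ∫⁻ x in E, gR (x.re, x.im) := setLIntegral_mono
          (hgRmeas.comp (Complex.measurable_re.prodMk Complex.measurable_im)) hpt
      _ ≤ ∫⁻ x in Complex.measurableEquivRealProd ⁻¹' R, gR (x.re, x.im) :=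
          lintegral_mono_set hEE'
      _ = ∫⁻ x, Set.indicator (Complex.measurableEquivRealProd ⁻¹' R)
            (fun x : ℂ => gR (x.re, x.im)) x := by
          exact (lintegral_indicator (Complex.measurableEquivRealProd.measurable hRmeas) _).symm
      _ = ∫⁻ x, Set.indicator R gR (Complex.measurableEquivRealProd x) := by
          apply lintegral_congr
          intro x
          by_cases hmem : Complex.measurableEquivRealProd x ∈ R
          · rw [Set.indicator_of_mem hmem, Set.indicator_of_mem (by exact hmem),
              Complex.measurableEquivRealProd_apply]
          · rw [Set.indicator_of_notMem hmem, Set.indicator_of_notMem (by exact hmem)]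
      _ = ∫⁻ p, Set.indicator R gR p :=
          Complex.volume_preserving_equiv_real_prod.lintegral_comp (hgRmeas.indicator hRmeas)
  -- Step 6: Fubini and the one-dimensional estimates.
  set K : ℝ≥0∞ := ENNReal.ofReal (c1 * ((2/t) ^ (α + 1) / (α + 1))) with hK_def
  have hinner : ∀ y : ℝ, (∫⁻ x, Set.indicator R gR (x, y)) ≤
      Set.indicator (Set.Icc (-(1/t)) (1/t)) (fun _ => K) y := by
    intro y
    by_cases hy : |y| ≤ 1/t
    · rw [Set.indicator_of_mem (by rw [Set.mem_Icc, ← abs_le]; exact hy)]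
      set b : ℝ := Real.sqrt (1 - y ^ 2) with hb_def
      set a : ℝ := s - 1/t with ha_def
      set m : ℝ := min b (s + 1/t) with hm_def
      have hy2 : y ^ 2 ≤ 1/9 := by
        have h1 : |y| ≤ 1/3 := by linarith
        have h3 : |y| ^ 2 ≤ (1/3:ℝ) ^ 2 := pow_le_pow_left₀ (abs_nonneg y) h1 2
        rw [← sq_abs y]
        calc |y| ^ 2 ≤ (1/3:ℝ) ^ 2 := h3
          _ = 1/9 := by norm_num
      have hb2 : b ^ 2 = 1 - y ^ 2 := Real.sq_sqrt (by linarith)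
      have hb23 : (2:ℝ)/3 ≤ b := by
        have h1 : Real.sqrt ((2/3:ℝ)^2) ≤ b := by
          apply Real.sqrt_le_sqrt
          rw [show ((2:ℝ)/3)^2 = 4/9 by norm_num]
          linarith
        rwa [Real.sqrt_sq (by norm_num : (0:ℝ) ≤ 2/3)] at h1
      have ha13 : (1:ℝ)/3 ≤ a := by
        rw [ha_def, hs_def]
        have : 1/t < 2/3 - ε/2 := by linarith
        linarith
      have hptx : ∀ x : ℝ, Set.indicator R gR (x, y) ≤
          Set.indicator (Set.Icc a m) (fun u => ENNReal.ofReal (c1 * (b - u) ^ α)) x := by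
        intro x
        by_cases hx : (x, y) ∈ R
        · obtain ⟨⟨hx1, hx2⟩, -, hx3⟩ := hx
          have hxa : a ≤ x := hx1
          have h0x : (0:ℝ) ≤ x := by linarith
          have hxb : x ≤ b := by
            have h1 : Real.sqrt (x ^ 2) ≤ Real.sqrt (1 - y ^ 2) :=
              Real.sqrt_le_sqrt (by linarith)
            rwa [Real.sqrt_sq h0x] at h1
          have hxm : x ∈ Set.Icc a m := ⟨hxa, le_min hxb hx2⟩
          rw [Set.indicator_of_mem (by exact ⟨⟨hx1, hx2⟩, hy, hx3⟩), Set.indicator_of_mem hxm]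
          apply ENNReal.ofReal_le_ofReal
          apply mul_le_mul_of_nonneg_left ?_ hc1.le
          have hfact : 1 - (x ^ 2 + y ^ 2) = (b - x) * (b + x) := by
            linear_combination -hb2
          rw [hfact, Real.mul_rpow (by linarith) (by linarith : (0:ℝ) ≤ b + x)]
          have h1bx : (1:ℝ) ≤ b + x := by linarith
          have hle1 : (b + x) ^ α ≤ 1 := Real.rpow_le_one_of_one_le_of_nonpos h1bx hα0.le
          exact mul_le_of_le_one_right (Real.rpow_nonneg (by linarith) _) hle1
        · rw [Set.indicator_of_notMem hx]
          exact zero_le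
      calc (∫⁻ x, Set.indicator R gR (x, y))
          ≤ ∫⁻ x, Set.indicator (Set.Icc a m) (fun u => ENNReal.ofReal (c1 * (b - u) ^ α)) x :=
            lintegral_mono hptx
        _ = ∫⁻ x in Set.Icc a m, ENNReal.ofReal (c1 * (b - x) ^ α) := by
            rw [lintegral_indicator measurableSet_Icc]
        _ = ∫⁻ x in Set.Icc a m, ENNReal.ofReal c1 * ENNReal.ofReal ((b - x) ^ α) := by
            apply lintegral_congr
            intro x
            rw [← ENNReal.ofReal_mul hc1.le]
        _ = ENNReal.ofReal c1 * ∫⁻ x in Set.Icc a m, ENNReal.ofReal ((b - x) ^ α) :=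
            lintegral_const_mul _
              (Measurable.ennreal_ofReal ((measurable_id.const_sub b).pow measurable_const))
        _ ≤ ENNReal.ofReal c1 * ENNReal.ofReal ((2/t) ^ (α + 1) / (α + 1)) := by
            apply mul_le_mul_right
            apply lintegral_Icc_rpow_sub_le hα hα0 (min_le_left _ _) (by positivity)
            have h5 : m ≤ s + 1/t := min_le_right _ _
            have h6 : a = s - 1/t := ha_def
            have h7 : (2:ℝ)/t = (s + 1/t) - (s - 1/t) := by ring
            rw [h7, h6]
            linarith
        _ = K := by rw [hK_def, ENNReal.ofReal_mul hc1.le]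
    · have h0 : ∀ x : ℝ, Set.indicator R gR (x, y) = 0 := fun x =>
        Set.indicator_of_notMem (fun hmem => hy hmem.2.1) _
      rw [Set.indicator_of_notMem (by rw [Set.mem_Icc, ← abs_le]; exact hy)]
      simp only [h0, lintegral_zero, le_refl]
  have hC3 : (∫⁻ p, Set.indicator R gR p) ≤ K * ENNReal.ofReal (2/t) := by
    rw [MeasureTheory.Measure.volume_eq_prod, lintegral_prod_symm _ (hgRmeas.indicator hRmeas).aemeasurable]
    calc (∫⁻ y, ∫⁻ x, Set.indicator R gR (x, y)) ≤
        ∫⁻ y, Set.indicator (Set.Icc (-(1/t)) (1/t)) (fun _ => K) y := lintegral_mono hinner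
      _ = K * volume (Set.Icc (-(1/t)) (1/t)) := lintegral_indicator_const measurableSet_Icc K
      _ = K * ENNReal.ofReal (2/t) := by
          rw [Real.volume_Icc]
          congr 1
          congr 1
          ring
  -- Step 7: put everything together and do the final arithmetic.
  set P : ℝ := c1 * ((2/t) ^ (α + 1) / (α + 1)) * (2/t) with hP_def
  have hPnn : 0 ≤ P := by
    have := Real.rpow_nonneg (by positivity : (0:ℝ) ≤ 2/t) (α + 1)
    positivity
  have hbound : μ {x : ℂ | t ≤ ‖z - x‖⁻¹} ≤ ENNReal.ofReal P := by
    calc μ {x : ℂ | t ≤ ‖z - x‖⁻¹} ≤ ∫⁻ p, Set.indicator R gR p := hC2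
      _ ≤ K * ENNReal.ofReal (2/t) := hC3
      _ = ENNReal.ofReal P := by
          rw [hK_def, hP_def, ← ENNReal.ofReal_mul (by positivity)]
  have htoReal : (μ {x : ℂ | t ≤ ‖z - x‖⁻¹}).toReal ≤ P := by
    have h1 := ENNReal.toReal_mono ENNReal.ofReal_ne_top hbound
    rwa [ENNReal.toReal_ofReal hPnn] at h1
  refine htoReal.trans (le_of_eq ?_)
  have ht0' : (0:ℝ) < 2/t := by positivity
  have hA1 : ((2:ℝ)/t) ^ (α + 1) * (2/t) = (2/t) ^ (α + 2) := by
    have h7 := Real.rpow_add_one ht0'.ne' (α + 1)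
    rw [show (α + 1) + 1 = α + 2 by ring] at h7
    exact h7.symm
  have hA2 : ((2:ℝ)/t) ^ (α + 2) = 2 ^ (α + 2) / t ^ (α + 2) :=
    Real.div_rpow (by norm_num) ht0.le _
  have hA3 : t ^ (-(2 + α)) = (t ^ (α + 2))⁻¹ := by
    rw [show -(2 + α) = -(α + 2) by ring, Real.rpow_neg ht0.le]
  have htpos : (0:ℝ) < t ^ (α + 2) := Real.rpow_pos_of_pos ht0 _
  rw [hP_def, hc1_def, hA3]
  have e1 : Cμ / (Real.pi * (1 - ε)) * ((2/t) ^ (α + 1) / (α + 1)) * (2/t) =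
      Cμ / (Real.pi * (1 - ε)) * ((2/t) ^ (α + 1) * (2/t)) / (α + 1) := by ring
  rw [e1, hA1, hA2]
  field_simp
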